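/- Let μ be a finite positive Radon Borel measure on K concentrated on ι(W), i.e. μ(K \ ι(W)) = 0 (the set ι(W) is a Gδ, hence Borel, subset of K). If ν is a finite positive Radon Borel measure on K whose pushforward under the quotient map q equals that of μ, i.e. q♯ν = q♯μ, then ν = μ. -/

import Mathlib

open MeasureTheory

/-- `Wt M` is the set `W = {(x,y) ∈ M × M : x ≠ y}`, a topological subspace of `M × M`. -/
abbrev Wt (M : Type*) [MetricSpace M] := {p : M × M // p.1 ≠ p.2}

/-- `g : W → ℝ` satisfies the G-inequality. -/
def GIneq {M : Type*} [MetricSpace M] (g : Wt M → ℝ) : Prop :=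
  ∀ (x u y : M) (hxu : x ≠ u) (huy : u ≠ y) (hxy : x ≠ y),
    dist x y * g ⟨(x, y), hxy⟩ ≤ dist x u * g ⟨(x, u), hxu⟩ + dist u y * g ⟨(u, y), huy⟩

/-- The cone `G` of continuous functions on `K = βW` satisfying the G-inequality
on points of `W`. -/
def GSet (M : Type*) [MetricSpace M] : Set (StoneCech (Wt M) → ℝ) :=
  {g | Continuous g ∧ GIneq fun p => g (stoneCechUnit p)}

/-- The Choquet-like quasi-order `μ ≼ ν`. -/
def Preceq {M : Type*} [MetricSpace M] [MeasurableSpace (StoneCech (Wt M))]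
    (μ ν : Measure (StoneCech (Wt M))) : Prop :=
  ∀ g ∈ GSet M, ∫ ζ, g ζ ∂μ ≤ ∫ ζ, g ζ ∂ν

/-- `μ` is `≼`-minimal among finite positive Radon Borel measures. -/
def IsMinimal {M : Type*} [MetricSpace M] [MeasurableSpace (StoneCech (Wt M))]
    (μ : Measure (StoneCech (Wt M))) : Prop :=
  ∀ ν : Measure (StoneCech (Wt M)),
    IsFiniteMeasure ν → ν.InnerRegular → Preceq ν μ → Preceq μ ν

/-- The equivalence relation `ζ ∼ ω` iff `g ζ = g ω` for all `g ∈ G`. -/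
def gSetoid (M : Type*) [MetricSpace M] : Setoid (StoneCech (Wt M)) where
  r ζ ω := ∀ g ∈ GSet M, g ζ = g ω
  iseqv := ⟨fun _ _ _ => rfl, fun h g hg => (h g hg).symm,
    fun h1 h2 g hg => (h1 g hg).trans (h2 g hg)⟩

/-- The quotient map `q : K → K/∼`. -/
def gq (M : Type*) [MetricSpace M] :
    StoneCech (Wt M) → Quotient (gSetoid M) := Quotient.mk _

section Aux

open Filter Topology Set

variable {M : Type*} [MetricSpace M]

/-- Any continuous function on `W` with values in a closed bounded interval extends
continuously to the Stone–Čech compactification. -/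
lemma exists_gext {h : Wt M → ℝ} (hc : Continuous h) {l u : ℝ}
    (hb : ∀ w, h w ∈ Set.Icc l u) :
    ∃ H : StoneCech (Wt M) → ℝ, Continuous H ∧ ∀ w, H (stoneCechUnit w) = h w := by
  haveI : CompactSpace (Set.Icc l u) := isCompact_iff_compactSpace.mp isCompact_Icc
  have hc' : Continuous (fun w => (⟨h w, hb w⟩ : Set.Icc l u)) := hc.subtype_mk _
  let H0 : StoneCech (Wt M) → Set.Icc l u := stoneCechExtend hc'
  refine ⟨fun ζ => (H0 ζ : ℝ),
    continuous_subtype_val.comp (continuous_stoneCechExtend hc'), fun w => ?_⟩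
  have := congrFun (stoneCechExtend_extends hc') w
  exact congrArg Subtype.val this

private lemma min_subadd {c a b d : ℝ} (hd : d ≤ a + b) (ha : 0 ≤ a) (hb : 0 ≤ b)
    (hc : 0 ≤ c) : min d c ≤ min a c + min b c := by
  rcases le_total a c with h1 | h1
  · rcases le_total b c with h2 | h2
    · rw [min_eq_left h1, min_eq_left h2]
      exact le_trans (min_le_left d c) (by linarith)
    · rw [min_eq_left h1, min_eq_right h2]
      exact le_trans (min_le_right d c) (by linarith)
  · rw [min_eq_right h1]
    have h3 : 0 ≤ min b c := le_min hb hc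
    linarith [min_le_right d c]

private lemma mul_min_one_div {d c : ℝ} (hd : 0 < d) : d * min 1 (c / d) = min d c := by
  rcases le_total d c with h | h
  · rw [min_eq_left ((le_div_iff₀ hd).mpr (by linarith)), mul_one, min_eq_left h]
  · rw [min_eq_right ((div_le_one hd).mpr h), mul_comm,
      div_mul_cancel₀ c (ne_of_gt hd), min_eq_right h]

/-- Key separation lemma: a point of `βW` that is `∼`-equivalent to a point of `W`
is equal to it. -/
lemma sep_lemma (p : Wt M) (ζ : StoneCech (Wt M))
    (hrel : ∀ g ∈ GSet M, g ζ = g (stoneCechUnit p)) : ζ = stoneCechUnit p := by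
  classical
  obtain ⟨⟨x, y⟩, hxy⟩ := p
  set p : Wt M := ⟨(x, y), hxy⟩ with hp
  set D : ℝ := dist x y with hDdef
  have hD : 0 < D := dist_pos.mpr hxy
  -- the filter of `W` induced by ζ
  set F : Filter (Wt M) := Filter.comap stoneCechUnit (𝓝 ζ) with hF
  have hFne : F.NeBot := by
    rw [hF, Filter.comap_neBot_iff]
    intro t ht
    rcases mem_closure_iff_nhds.mp (denseRange_stoneCechUnit ζ) t ht with ⟨b, hbt, a, rfl⟩
    exact ⟨a, hbt⟩
  -- generic transfer: bounded continuous G-functions have the right limit along F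
  have key : ∀ h : Wt M → ℝ, Continuous h → (∀ w, h w ∈ Set.Icc (-1 : ℝ) 1) →
      GIneq h → Tendsto h F (𝓝 (h p)) := by
    intro h hc hb hG
    obtain ⟨H, Hcont, Hunit⟩ := exists_gext hc hb
    have hHh : (fun w => H (stoneCechUnit w)) = h := funext Hunit
    have hmem : H ∈ GSet M := ⟨Hcont, by rw [GIneq] at hG ⊢; simp only [Hunit]; exact hG⟩
    have hval : H ζ = h p := by rw [hrel H hmem, Hunit]
    have : Tendsto (fun w => H (stoneCechUnit w)) F (𝓝 (H ζ)) :=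
      (Hcont.tendsto ζ).comp tendsto_comap
    rw [hHh, hval] at this
    exact this
  -- distance and test functions
  set δ : Wt M → ℝ := fun w => dist (w : M × M).1 (w : M × M).2 with hδdef
  have hδpos : ∀ w : Wt M, 0 < δ w := fun w => dist_pos.mpr w.prop
  have hδcont : Continuous δ :=
    (continuous_fst.comp continuous_subtype_val).dist (continuous_snd.comp continuous_subtype_val)
  set f₁ : M → ℝ := fun m => max 0 (D - dist m x) with hf₁
  set f₂ : M → ℝ := fun m => max 0 (D - dist m y) with hf₂
  have hf₁cont : Continuous f₁ :=
    continuous_const.max (continuous_const.sub (continuous_id.dist continuous_const))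
  have hf₂cont : Continuous f₂ :=
    continuous_const.max (continuous_const.sub (continuous_id.dist continuous_const))
  have hf₁lip : ∀ a b : M, |f₁ a - f₁ b| ≤ dist a b := by
    intro a b
    calc |f₁ a - f₁ b| = |max (D - dist a x) 0 - max (D - dist b x) 0| := by
          simp only [hf₁]; rw [max_comm, max_comm (0 : ℝ) (D - dist b x)]
      _ ≤ |(D - dist a x) - (D - dist b x)| := abs_max_sub_max_le_abs _ _ _
      _ = |dist a x - dist b x| := by
          rw [show (D - dist a x) - (D - dist b x) = -(dist a x - dist b x) by ring, abs_neg]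
      _ ≤ dist a b := abs_dist_sub_le a b x
  have hf₂lip : ∀ a b : M, |f₂ a - f₂ b| ≤ dist a b := by
    intro a b
    calc |f₂ a - f₂ b| = |max (D - dist a y) 0 - max (D - dist b y) 0| := by
          simp only [hf₂]; rw [max_comm, max_comm (0 : ℝ) (D - dist b y)]
      _ ≤ |(D - dist a y) - (D - dist b y)| := abs_max_sub_max_le_abs _ _ _
      _ = |dist a y - dist b y| := by
          rw [show (D - dist a y) - (D - dist b y) = -(dist a y - dist b y) by ring, abs_neg]
      _ ≤ dist a b := abs_dist_sub_le a b y
  have hf₁nonneg : ∀ m, 0 ≤ f₁ m := fun m => le_max_left _ _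
  have hf₂nonneg : ∀ m, 0 ≤ f₂ m := fun m => le_max_left _ _
  have hf₁le : ∀ m, f₁ m ≤ D := fun m => max_le hD.le (by linarith [dist_nonneg (x := m) (y := x)])
  have hf₂le : ∀ m, f₂ m ≤ D := fun m => max_le hD.le (by linarith [dist_nonneg (x := m) (y := y)])
  set e : Wt M → ℝ := fun w => min 1 ((D / 2) / δ w) with he
  set h₁ : Wt M → ℝ := fun w => (f₁ (w : M × M).1 - f₁ (w : M × M).2) / δ w with hh₁
  set h₂ : Wt M → ℝ := fun w => (f₂ (w : M × M).2 - f₂ (w : M × M).1) / δ w with hh₂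
  -- limits along F
  have Te : Tendsto e F (𝓝 (e p)) := by
    refine key e ?_ ?_ ?_
    · exact continuous_const.min (continuous_const.div hδcont fun w => (hδpos w).ne')
    · intro w
      refine Set.mem_Icc.mpr ⟨?_, min_le_left _ _⟩
      have h0 : (0:ℝ) ≤ min 1 ((D/2) / δ w) :=
        le_min zero_le_one (div_nonneg (by linarith) (hδpos w).le)
      simp only [he]
      linarith
    · intro a u b hau hub hab
      have h1 : dist a b * e ⟨(a, b), hab⟩ = min (dist a b) (D/2) :=
        mul_min_one_div (dist_pos.mpr hab)
      have h2 : dist a u * e ⟨(a, u), hau⟩ = min (dist a u) (D/2) :=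
        mul_min_one_div (dist_pos.mpr hau)
      have h3 : dist u b * e ⟨(u, b), hub⟩ = min (dist u b) (D/2) :=
        mul_min_one_div (dist_pos.mpr hub)
      rw [h1, h2, h3]
      exact min_subadd (dist_triangle a u b) dist_nonneg dist_nonneg (by linarith)
  have Th₁ : Tendsto h₁ F (𝓝 (h₁ p)) := by
    refine key h₁ ?_ ?_ ?_
    · exact Continuous.div
        ((hf₁cont.comp (continuous_fst.comp continuous_subtype_val)).sub
          (hf₁cont.comp (continuous_snd.comp continuous_subtype_val)))
        hδcont fun w => (hδpos w).ne'
    · intro w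
      have hnum := hf₁lip (w : M × M).1 (w : M × M).2
      have hw := hδpos w
      rw [Set.mem_Icc, ← abs_le]
      simp only [hh₁]
      rw [abs_div, abs_of_pos hw, div_le_one hw]
      exact hnum
    · intro a u b hau hub hab
      have h1 : dist a b * h₁ ⟨(a, b), hab⟩ = f₁ a - f₁ b :=
        mul_div_cancel₀ _ (dist_pos.mpr hab).ne'
      have h2 : dist a u * h₁ ⟨(a, u), hau⟩ = f₁ a - f₁ u :=
        mul_div_cancel₀ _ (dist_pos.mpr hau).ne'
      have h3 : dist u b * h₁ ⟨(u, b), hub⟩ = f₁ u - f₁ b :=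
        mul_div_cancel₀ _ (dist_pos.mpr hub).ne'
      rw [h1, h2, h3]
      linarith
  have Th₂ : Tendsto h₂ F (𝓝 (h₂ p)) := by
    refine key h₂ ?_ ?_ ?_
    · exact Continuous.div
        ((hf₂cont.comp (continuous_snd.comp continuous_subtype_val)).sub
          (hf₂cont.comp (continuous_fst.comp continuous_subtype_val)))
        hδcont fun w => (hδpos w).ne'
    · intro w
      have hnum := hf₂lip (w : M × M).2 (w : M × M).1
      rw [dist_comm] at hnum
      have hw := hδpos w
      rw [Set.mem_Icc, ← abs_le]
      simp only [hh₂]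
      rw [abs_div, abs_of_pos hw, div_le_one hw]
      exact hnum
    · intro a u b hau hub hab
      have h1 : dist a b * h₂ ⟨(a, b), hab⟩ = f₂ b - f₂ a :=
        mul_div_cancel₀ _ (dist_pos.mpr hab).ne'
      have h2 : dist a u * h₂ ⟨(a, u), hau⟩ = f₂ u - f₂ a :=
        mul_div_cancel₀ _ (dist_pos.mpr hau).ne'
      have h3 : dist u b * h₂ ⟨(u, b), hub⟩ = f₂ b - f₂ u :=
        mul_div_cancel₀ _ (dist_pos.mpr hub).ne'
      rw [h1, h2, h3]
      linarith
  -- compute values at p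
  have hδp : δ p = D := rfl
  have hep : e p = 1 / 2 := by
    have : (D / 2) / D = 1 / 2 := by
      rw [show (D / 2) / D = (D / D) / 2 by ring, div_self hD.ne']
    simp only [he, hδp, this]
    norm_num
  have hf₁x : f₁ x = D := by simp [hf₁, hD.le]
  have hf₁y : f₁ y = 0 := by
    simp only [hf₁]
    rw [dist_comm y x, ← hDdef, sub_self, max_self]
  have hf₂y : f₂ y = D := by simp [hf₂, hD.le]
  have hf₂x : f₂ x = 0 := by
    simp only [hf₂]
    rw [← hDdef, sub_self, max_self]
  have hh₁p : h₁ p = 1 := by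
    simp only [hh₁, hδp]
    rw [show f₁ ((p : M × M).1) = D from hf₁x, show f₁ ((p : M × M).2) = 0 from hf₁y,
      sub_zero]
    exact div_self hD.ne'
  have hh₂p : h₂ p = 1 := by
    simp only [hh₂, hδp]
    rw [show f₂ ((p : M × M).2) = D from hf₂y, show f₂ ((p : M × M).1) = 0 from hf₂x,
      sub_zero]
    exact div_self hD.ne'
  rw [hep] at Te
  rw [hh₁p] at Th₁
  rw [hh₂p] at Th₂
  -- δ tends to D along F
  have Tδ : Tendsto δ F (𝓝 D) := by
    have hev : e =ᶠ[F] fun w => (D / 2) / δ w := by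
      filter_upwards [Te.eventually (eventually_lt_nhds (show (1:ℝ)/2 < 1 by norm_num))]
        with w hw
      rcases le_total ((D / 2) / δ w) 1 with h | h
      · exact min_eq_right h
      · exact absurd (by simpa [he, min_eq_left h] using hw) (lt_irrefl 1)
    have Tr : Tendsto (fun w => (D / 2) / δ w) F (𝓝 (1 / 2)) := Tendsto.congr' hev Te
    have T2 : Tendsto (fun w => (D / 2) / ((D / 2) / δ w)) F (𝓝 ((D / 2) / (1 / 2))) :=
      tendsto_const_nhds.div Tr (by norm_num)
    have heq : ∀ w : Wt M, (D / 2) / ((D / 2) / δ w) = δ w := by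
      intro w
      rw [div_div_eq_mul_div, mul_comm, mul_div_assoc,
        div_self (by positivity : (D:ℝ)/2 ≠ 0), mul_one]
    have hlim : (D / 2) / (1 / 2 : ℝ) = D := by ring
    rw [hlim] at T2
    exact Tendsto.congr heq T2
  -- f₁ along the first coordinate tends to D
  have Tdiff₁ : Tendsto (fun w : Wt M => f₁ (w : M × M).1 - f₁ (w : M × M).2) F (𝓝 D) := by
    have T := Th₁.mul Tδ
    rw [one_mul] at T
    refine Tendsto.congr (fun w => ?_) T
    simp only [hh₁]
    exact div_mul_cancel₀ _ (hδpos w).ne'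
  have Tf₁ : Tendsto (fun w : Wt M => f₁ (w : M × M).1) F (𝓝 D) := by
    refine tendsto_of_tendsto_of_tendsto_of_le_of_le Tdiff₁ tendsto_const_nhds
      (fun w => ?_) (fun w => hf₁le _)
    have := hf₁nonneg (w : M × M).2
    linarith
  have Tdx : Tendsto (fun w : Wt M => dist (w : M × M).1 x) F (𝓝 0) := by
    have hev : (fun w : Wt M => D - f₁ (w : M × M).1) =ᶠ[F]
        fun w : Wt M => dist (w : M × M).1 x := by
      filter_upwards [Tf₁.eventually (eventually_gt_nhds hD)] with w hw
      have hle : 0 ≤ D - dist (w : M × M).1 x := by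
        by_contra hlt
        push_neg at hlt
        rw [show f₁ ((w : M × M).1) = max 0 (D - dist (w : M × M).1 x) from rfl,
          max_eq_left hlt.le] at hw
        exact lt_irrefl 0 hw
      rw [show f₁ ((w : M × M).1) = max 0 (D - dist (w : M × M).1 x) from rfl,
        max_eq_right hle]
      ring
    have T : Tendsto (fun w : Wt M => D - f₁ (w : M × M).1) F (𝓝 (D - D)) :=
      tendsto_const_nhds.sub Tf₁
    rw [sub_self] at T
    exact Tendsto.congr' hev T
  -- f₂ along the second coordinate tends to D
  have Tdiff₂ : Tendsto (fun w : Wt M => f₂ (w : M × M).2 - f₂ (w : M × M).1) F (𝓝 D) := by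
    have T := Th₂.mul Tδ
    rw [one_mul] at T
    refine Tendsto.congr (fun w => ?_) T
    simp only [hh₂]
    exact div_mul_cancel₀ _ (hδpos w).ne'
  have Tf₂ : Tendsto (fun w : Wt M => f₂ (w : M × M).2) F (𝓝 D) := by
    refine tendsto_of_tendsto_of_tendsto_of_le_of_le Tdiff₂ tendsto_const_nhds
      (fun w => ?_) (fun w => hf₂le _)
    have := hf₂nonneg (w : M × M).1
    linarith
  have Tdy : Tendsto (fun w : Wt M => dist (w : M × M).2 y) F (𝓝 0) := by
    have hev : (fun w : Wt M => D - f₂ (w : M × M).2) =ᶠ[F]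
        fun w : Wt M => dist (w : M × M).2 y := by
      filter_upwards [Tf₂.eventually (eventually_gt_nhds hD)] with w hw
      have hle : 0 ≤ D - dist (w : M × M).2 y := by
        by_contra hlt
        push_neg at hlt
        rw [show f₂ ((w : M × M).2) = max 0 (D - dist (w : M × M).2 y) from rfl,
          max_eq_left hlt.le] at hw
        exact lt_irrefl 0 hw
      rw [show f₂ ((w : M × M).2) = max 0 (D - dist (w : M × M).2 y) from rfl,
        max_eq_right hle]
      ring
    have T : Tendsto (fun w : Wt M => D - f₂ (w : M × M).2) F (𝓝 (D - D)) :=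
      tendsto_const_nhds.sub Tf₂
    rw [sub_self] at T
    exact Tendsto.congr' hev T
  -- conclude convergence in W
  have Tx : Tendsto (fun w : Wt M => (w : M × M).1) F (𝓝 x) :=
    tendsto_iff_dist_tendsto_zero.mpr Tdx
  have Ty : Tendsto (fun w : Wt M => (w : M × M).2) F (𝓝 y) :=
    tendsto_iff_dist_tendsto_zero.mpr Tdy
  have Tval : Tendsto (fun w : Wt M => (w : M × M)) F (𝓝 ((x, y) : M × M)) := by
    have T := Tx.prodMk_nhds Ty
    exact Tendsto.congr (fun w => rfl) T
  have Tid : Tendsto (fun w : Wt M => w) F (𝓝 p) := tendsto_subtype_rng.mpr Tval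
  have Tιp : Tendsto (stoneCechUnit : Wt M → StoneCech (Wt M)) F (𝓝 (stoneCechUnit p)) :=
    (continuous_stoneCechUnit.tendsto p).comp Tid
  have Tιζ : Tendsto (stoneCechUnit : Wt M → StoneCech (Wt M)) F (𝓝 ζ) := tendsto_comap
  exact tendsto_nhds_unique Tιζ Tιp

end Aux

theorem stmt9 {M : Type*} [MetricSpace M]
    [MeasurableSpace (StoneCech (Wt M))] [BorelSpace (StoneCech (Wt M))]
    [MeasurableSpace (Quotient (gSetoid M))] [BorelSpace (Quotient (gSetoid M))]
    (h3 : ∃ x y z : M, x ≠ y ∧ x ≠ z ∧ y ≠ z)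
    (μ ν : Measure (StoneCech (Wt M)))
    [IsFiniteMeasure μ] [IsFiniteMeasure ν] [μ.InnerRegular] [ν.InnerRegular]
    (hconc : μ (Set.range (stoneCechUnit : Wt M → StoneCech (Wt M)))ᶜ = 0)
    (hmap : Measure.map (gq M) ν = Measure.map (gq M) μ) :
    ν = μ := by
  classical
  have hqcont : Continuous (gq M) := continuous_quotient_mk'
  have hqmeas : Measurable (gq M) := hqcont.measurable
  haveI hT2q : T2Space (Quotient (gSetoid M)) := by
    constructor
    intro a b hab
    induction a using Quotient.ind with
    | _ ζ =>
    induction b using Quotient.ind with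
    | _ ω =>
    have hnr : ¬ (∀ g ∈ GSet M, g ζ = g ω) := fun h => hab (Quotient.sound h)
    push_neg at hnr
    obtain ⟨g, hg, hne⟩ := hnr
    have hlift : Continuous (Quotient.lift g (fun a b hab => hab g hg) :
        Quotient (gSetoid M) → ℝ) := hg.1.quotient_lift _
    exact separated_by_continuous hlift hne
  have hsat : ∀ C : Set (StoneCech (Wt M)), (gq M) ⁻¹' ((gq M) '' C) ⊆
      C ∪ (Set.range (stoneCechUnit : Wt M → StoneCech (Wt M)))ᶜ := by
    intro C ζ hζ
    by_cases hζS : ζ ∈ Set.range (stoneCechUnit : Wt M → StoneCech (Wt M))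
    · obtain ⟨p, rfl⟩ := hζS
      obtain ⟨c, hcC, hc⟩ := hζ
      have hrel : ∀ g ∈ GSet M, g c = g (stoneCechUnit p) := Quotient.exact hc
      have hcp : c = stoneCechUnit p := sep_lemma p c hrel
      exact Or.inl (hcp ▸ hcC)
    · exact Or.inr hζS
  have hcompKey : ∀ C : Set (StoneCech (Wt M)), IsCompact C → ν C ≤ μ C := by
    intro C hC
    have hqC : IsCompact ((gq M) '' C) := hC.image hqcont
    have hqCm : MeasurableSet ((gq M) '' C) := hqC.isClosed.measurableSet
    have h1 : ν ((gq M) ⁻¹' ((gq M) '' C)) = μ ((gq M) ⁻¹' ((gq M) '' C)) := by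
      calc ν ((gq M) ⁻¹' ((gq M) '' C))
          = (Measure.map (gq M) ν) ((gq M) '' C) := (Measure.map_apply hqmeas hqCm).symm
        _ = (Measure.map (gq M) μ) ((gq M) '' C) := by rw [hmap]
        _ = μ ((gq M) ⁻¹' ((gq M) '' C)) := Measure.map_apply hqmeas hqCm
    calc ν C ≤ ν ((gq M) ⁻¹' ((gq M) '' C)) := measure_mono (Set.subset_preimage_image _ _)
      _ = μ ((gq M) ⁻¹' ((gq M) '' C)) := h1
      _ ≤ μ (C ∪ (Set.range (stoneCechUnit : Wt M → StoneCech (Wt M)))ᶜ) :=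
          measure_mono (hsat C)
      _ ≤ μ C + μ (Set.range (stoneCechUnit : Wt M → StoneCech (Wt M)))ᶜ :=
          measure_union_le _ _
      _ = μ C := by rw [hconc, add_zero]
  have htot : ν Set.univ = μ Set.univ := by
    calc ν Set.univ = (Measure.map (gq M) ν) Set.univ := by
          rw [Measure.map_apply hqmeas MeasurableSet.univ, Set.preimage_univ]
      _ = (Measure.map (gq M) μ) Set.univ := by rw [hmap]
      _ = μ Set.univ := by rw [Measure.map_apply hqmeas MeasurableSet.univ, Set.preimage_univ]
  have hle : ∀ A : Set (StoneCech (Wt M)), MeasurableSet A → ν A ≤ μ A := by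
    intro A hA
    refine le_of_forall_lt fun r hr => ?_
    obtain ⟨C, hCA, hCcomp, hrC⟩ :=
      (inferInstance : ν.InnerRegular).innerRegular hA r hr
    exact hrC.trans_le ((hcompKey C hCcomp).trans (measure_mono hCA))
  ext A hA
  refine le_antisymm (hle A hA) ?_
  have hAc := hle Aᶜ hA.compl
  have e1 : ν A + ν Aᶜ = μ A + μ Aᶜ := by
    rw [measure_add_measure_compl hA, measure_add_measure_compl hA, htot]
  have h2 : μ A + ν Aᶜ ≤ ν A + ν Aᶜ := by
    rw [e1]
    exact add_le_add le_rfl hAc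
  exact (ENNReal.add_le_add_iff_right (measure_ne_top ν Aᶜ)).mp h2
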